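/- Let M₀ and M₁ be finite matroids on ground set E. Then every common independent set I of M₀ and M₁ can be extended to a maximum-size common independent set J (|J| = max over common independent sets) such that I ⊆ span_{M₀}(J) ∩ span_{M₁}(J). -/

import Mathlib

open Set

/-- Auxiliary exchange lemma: if `J` is a maximum-size common independent set which, among
those, maximizes `(J ∩ I).ncard`, then every `x ∈ I` lies in `M₀.closure J`. -/
private lemma aux_mem_closure {α : Type*} {M₀ M₁ : Matroid α} {I J : Set α} {x : α}
    (hJ₀ : M₀.Indep J) (hJ₁ : M₁.Indep J)
    (hmax : ∀ K, M₀.Indep K → M₁.Indep K → K.ncard ≤ J.ncard)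
    (hintermax : ∀ K, M₀.Indep K → M₁.Indep K → K.ncard = J.ncard →
      (K ∩ I).ncard ≤ (J ∩ I).ncard)
    (hI₁ : M₁.Indep I) (hJfin : J.Finite)
    (hx : x ∈ I) (hxE0 : x ∈ M₀.E) (hxE1 : x ∈ M₁.E) : x ∈ M₀.closure J := by
  by_contra hnot
  have hxJ : x ∉ J := fun h => hnot (M₀.subset_closure J hJ₀.subset_ground h)
  have hins0 : M₀.Indep (insert x J) :=
    hJ₀.insert_indep_iff.mpr (Or.inl ⟨hxE0, hnot⟩)
  have hnotins1 : ¬ M₁.Indep (insert x J) := by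
    intro h1
    have := hmax (insert x J) hins0 h1
    rw [Set.ncard_insert_of_notMem hxJ hJfin] at this
    omega
  have hxcl1 : x ∈ M₁.closure J := by
    by_contra hxcl
    exact hnotins1 (hJ₁.insert_indep_iff.mpr (Or.inl ⟨hxE1, hxcl⟩))
  have hJbasis : M₁.IsBasis J (insert x J) :=
    hJ₁.isBasis_of_subset_of_subset_closure (subset_insert _ _)
      (insert_subset hxcl1 (M₁.subset_closure J hJ₁.subset_ground))
  -- extend `insert x (J ∩ I)` to a basis `B` of `insert x J` in `M₁`
  have hT1 : M₁.Indep (insert x (J ∩ I)) :=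
    hI₁.subset (insert_subset hx inter_subset_right)
  have hTsub : insert x (J ∩ I) ⊆ insert x J :=
    insert_subset_insert inter_subset_left
  obtain ⟨B, hB, hTB⟩ := hT1.subset_isBasis_of_subset hTsub
    (insert_subset hxE1 hJ₁.subset_ground)
  have hB0 : M₀.Indep B := hins0.subset hB.subset
  have hBfin : B.Finite := (hJfin.insert x).subset hB.subset
  have hBncard : B.ncard = J.ncard := by
    rw [Set.ncard_def, hB.encard_eq_encard hJbasis, ← Set.ncard_def]
  have hle := hintermax B hB0 hB.indep hBncard
  have hTBI : insert x (J ∩ I) ⊆ B ∩ I :=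
    subset_inter hTB (insert_subset hx inter_subset_right)
  have hTcard : (insert x (J ∩ I)).ncard = (J ∩ I).ncard + 1 :=
    Set.ncard_insert_of_notMem (fun h => hxJ h.1) (hJfin.inter_of_left I)
  have hle2 : (insert x (J ∩ I)).ncard ≤ (B ∩ I).ncard :=
    Set.ncard_le_ncard hTBI (hBfin.inter_of_left I)
  omega

/-- **Cofinality of maximum common independent sets (finite case).** Every common independent
set `I` of two finite matroids lies below some maximum-size common independent set `J` in the
order `I ⊴ J` iff `I ⊆ span_{M₀}(J) ∩ span_{M₁}(J)`. -/
theorem strongly_maximal_cofinal {α : Type*} (M₀ M₁ : Matroid α) [M₀.Finite] [M₁.Finite]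
    (hE : M₀.E = M₁.E) (I : Set α) (hI₀ : M₀.Indep I) (hI₁ : M₁.Indep I) :
    ∃ J, M₀.Indep J ∧ M₁.Indep J ∧
      (∀ K, M₀.Indep K → M₁.Indep K → K.ncard ≤ J.ncard) ∧
      I ⊆ M₀.closure J ∩ M₁.closure J := by
  classical
  set n := M₀.E.ncard with hn
  set f : Set α → ℕ := fun J => (n + 1) * J.ncard + (J ∩ I).ncard with hf
  have hSfin : {J : Set α | M₀.Indep J ∧ M₁.Indep J}.Finite := by
    apply M₀.ground_finite.finite_subsets.subset
    rintro J ⟨hJ₀, _⟩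
    exact hJ₀.subset_ground
  obtain ⟨J, hJmem, hJmax⟩ :=
    Set.exists_max_image {J : Set α | M₀.Indep J ∧ M₁.Indep J} f hSfin ⟨I, hI₀, hI₁⟩
  obtain ⟨hJ₀, hJ₁⟩ := hJmem
  have hJfin : J.Finite := M₀.ground_finite.subset hJ₀.subset_ground
  have hle_n : ∀ K : Set α, M₀.Indep K → K.ncard ≤ n :=
    fun K hK => Set.ncard_le_ncard hK.subset_ground M₀.ground_finite
  have hmax : ∀ K, M₀.Indep K → M₁.Indep K → K.ncard ≤ J.ncard := by
    intro K hK₀ hK₁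
    by_contra hlt
    push_neg at hlt
    have hfK := hJmax K ⟨hK₀, hK₁⟩
    simp only [hf] at hfK
    have h1 : (n + 1) * (J.ncard + 1) ≤ (n + 1) * K.ncard :=
      Nat.mul_le_mul_left _ hlt
    have h2 : (J ∩ I).ncard ≤ n := by
      have := hle_n (J ∩ I) (hJ₀.subset inter_subset_left)
      exact this
    nlinarith
  have hintermax : ∀ K, M₀.Indep K → M₁.Indep K → K.ncard = J.ncard →
      (K ∩ I).ncard ≤ (J ∩ I).ncard := by
    intro K hK₀ hK₁ hcard
    have hfK := hJmax K ⟨hK₀, hK₁⟩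
    simp only [hf, hcard] at hfK
    omega
  refine ⟨J, hJ₀, hJ₁, hmax, fun x hx => ⟨?_, ?_⟩⟩
  · exact aux_mem_closure hJ₀ hJ₁ hmax hintermax hI₁ hJfin hx
      (hI₀.subset_ground hx) (hI₁.subset_ground hx)
  · exact aux_mem_closure hJ₁ hJ₀ (fun K h1 h0 => hmax K h0 h1)
      (fun K h1 h0 => hintermax K h0 h1) hI₀ (M₁.ground_finite.subset hJ₁.subset_ground)
      hx (hI₁.subset_ground hx) (hI₀.subset_ground hx)
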